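/- Let K be a locally finite simplicial complex in a finite-dimensional real vector space and let B be its underlying space with the subspace topology (local finiteness: every point of B has a neighborhood in B meeting only finitely many faces of K). Then there exist continuous maps u : B × B → [0,1] and h : (B × B) × [0,1] → B × B such that: u⁻¹(0) = Δ(B); h((x,y),0) = (x,y) for all x, y ∈ B; h((x,x),t) = (x,x) for all x ∈ B and t ∈ [0,1]; the second coordinate of h((x,y),t) equals y for all x, y ∈ B and t ∈ [0,1]; and h((x,y),1) ∈ Δ(B) whenever u(x,y) < 1. In particular the pair (B × B, Δ(B)) is an NDR pair, and the fibrewise pointed space d(B) = (B × B, second-factor projection, diagonal section) over B is fibrewise well-pointed. -/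

import Mathlib

open unitInterval

namespace MilnorDiagAux

open Finset Set Geometry

variable {E : Type} [NormedAddCommGroup E] [NormedSpace ℝ E] [FiniteDimensional ℝ E]
variable (K : Geometry.SimplicialComplex ℝ E)

/-- Every point of the space of a simplicial complex lies in the convex hull of some face,
with convex weights. -/
theorem exists_face_wt (x : K.space) :
    ∃ p : Finset E × (E → ℝ),
      p.1 ∈ K.faces ∧ (x : E) ∈ convexHull ℝ (p.1 : Set E) ∧
      (∀ v, 0 ≤ p.2 v) ∧ (∀ v ∉ p.1, p.2 v = 0) ∧
      (∑ v ∈ p.1, p.2 v) = 1 ∧ (∑ v ∈ p.1, p.2 v • v) = (x : E) := by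
  classical
  obtain ⟨s, hs, hx⟩ := Geometry.SimplicialComplex.mem_space_iff.1 x.2
  obtain ⟨w, hw0, hw1, hwx⟩ := Finset.mem_convexHull.1 hx
  refine ⟨(s, fun v => if v ∈ s then w v else 0), hs, hx, ?_, ?_, ?_, ?_⟩
  · intro v
    by_cases hv : v ∈ s
    · show (0:ℝ) ≤ if v ∈ s then w v else 0
      rw [if_pos hv]; exact hw0 v hv
    · show (0:ℝ) ≤ if v ∈ s then w v else 0
      rw [if_neg hv]
  · intro v hv
    exact if_neg hv
  · show (∑ v ∈ s, if v ∈ s then w v else 0) = 1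
    rw [← hw1]
    exact Finset.sum_congr rfl fun v hv => if_pos hv
  · show (∑ v ∈ s, (if v ∈ s then w v else 0) • v) = (x : E)
    rw [Finset.centerMass_eq_of_sum_1 _ id hw1] at hwx
    simp only [id_eq] at hwx
    rw [← hwx]
    exact Finset.sum_congr rfl fun v hv => by rw [if_pos hv]

/-- The chosen carrier face of a point. -/
noncomputable def fc (x : K.space) : Finset E := (exists_face_wt K x).choose.1

/-- The chosen barycentric weights of a point. -/
noncomputable def wt (x : K.space) : E → ℝ := (exists_face_wt K x).choose.2

theorem fc_mem (x : K.space) : fc K x ∈ K.faces := (exists_face_wt K x).choose_spec.1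

theorem mem_hull_fc (x : K.space) : (x : E) ∈ convexHull ℝ ((fc K x : Set E)) :=
  (exists_face_wt K x).choose_spec.2.1

theorem wt_nonneg (x : K.space) (v : E) : 0 ≤ wt K x v :=
  (exists_face_wt K x).choose_spec.2.2.1 v

theorem wt_zero (x : K.space) (v : E) (hv : v ∉ fc K x) : wt K x v = 0 :=
  (exists_face_wt K x).choose_spec.2.2.2.1 v hv

theorem wt_sum (x : K.space) : (∑ v ∈ fc K x, wt K x v) = 1 :=
  (exists_face_wt K x).choose_spec.2.2.2.2.1

theorem wt_combo (x : K.space) : (∑ v ∈ fc K x, wt K x v • v) = (x : E) :=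
  (exists_face_wt K x).choose_spec.2.2.2.2.2

/-- Sums of a "zero-at-zero" transform of a weight function do not depend on the finset
containing its support. -/
theorem sum_ext {M : Type*} [AddCommMonoid M] {w : E → ℝ} {s t : Finset E}
    (hs : ∀ v ∉ s, w v = 0) (ht : ∀ v ∉ t, w v = 0) (F : E → ℝ → M)
    (hF : ∀ v, F v 0 = 0) : ∑ v ∈ s, F v (w v) = ∑ v ∈ t, F v (w v) := by
  classical
  have h1 : ∑ v ∈ s, F v (w v) = ∑ v ∈ s ∪ t, F v (w v) :=
    Finset.sum_subset Finset.subset_union_left fun v _ hv => by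
      rw [hs v hv, hF]
  have h2 : ∑ v ∈ t, F v (w v) = ∑ v ∈ s ∪ t, F v (w v) :=
    Finset.sum_subset Finset.subset_union_right fun v _ hv => by
      rw [ht v hv, hF]
  rw [h1, h2]

/-- Affine uniqueness of weights supported on one face. -/
theorem wt_unique {s : Finset E} (hs : s ∈ K.faces) {x : E} (w₁ w₂ : E → ℝ)
    (h₁0 : ∀ v ∉ s, w₁ v = 0) (h₂0 : ∀ v ∉ s, w₂ v = 0)
    (h₁ : ∑ v ∈ s, w₁ v = 1) (h₂ : ∑ v ∈ s, w₂ v = 1)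
    (hc₁ : ∑ v ∈ s, w₁ v • v = x) (hc₂ : ∑ v ∈ s, w₂ v • v = x) : w₁ = w₂ := by
  classical
  have hind := K.indep hs
  rw [affineIndependent_iff_eq_of_fintype_affineCombination_eq] at hind
  have hsum₁ : (∑ i : s, w₁ ↑i) = 1 := by rw [Finset.sum_coe_sort s w₁]; exact h₁
  have hsum₂ : (∑ i : s, w₂ ↑i) = 1 := by rw [Finset.sum_coe_sort s w₂]; exact h₂
  have key : (fun i : s => w₁ ↑i) = fun i : s => w₂ ↑i := by
    apply hind _ _ hsum₁ hsum₂
    rw [Finset.affineCombination_eq_linear_combination _ _ _ hsum₁,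
      Finset.affineCombination_eq_linear_combination _ _ _ hsum₂,
      Finset.sum_coe_sort s (fun v => w₁ v • v), Finset.sum_coe_sort s (fun v => w₂ v • v),
      hc₁, hc₂]
  funext v
  by_cases hv : v ∈ s
  · exact congrFun key ⟨v, hv⟩
  · rw [h₁0 v hv, h₂0 v hv]

/-- If `x` lies in the hull of a face `s`, then its weights are supported on `s`. -/
theorem wt_support_subset {s : Finset E} (hs : s ∈ K.faces) {x : K.space}
    (hx : (x : E) ∈ convexHull ℝ (s : Set E)) : ∀ v ∉ s, wt K x v = 0 := by
  classical
  have hxi : (x : E) ∈ convexHull ℝ ((fc K x ∩ s : Finset E) : Set E) := by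
    have := K.inter_subset_convexHull (fc_mem K x) hs ⟨mem_hull_fc K x, hx⟩
    simpa using this
  obtain ⟨w, hw0, hw1, hwx⟩ := Finset.mem_convexHull.1 hxi
  rw [Finset.centerMass_eq_of_sum_1 _ id hw1] at hwx
  simp only [id_eq] at hwx
  set w₃ : E → ℝ := fun v => if v ∈ fc K x ∩ s then w v else 0 with hw₃
  have hw₃zero : ∀ v, v ∉ fc K x ∩ s → w₃ v = 0 := fun v hv => if_neg hv
  have hkey : wt K x = w₃ := by
    apply wt_unique K (fc_mem K x) _ _ (wt_zero K x)
    · intro v hv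
      exact hw₃zero v fun hv' => hv (Finset.mem_of_mem_inter_left hv')
    · exact wt_sum K x
    · have e1 : ∑ v ∈ fc K x, w₃ v = ∑ v ∈ fc K x ∩ s, w₃ v :=
        (Finset.sum_subset Finset.inter_subset_left fun v hv hv' => hw₃zero v hv').symm
      have e2 : ∑ v ∈ fc K x ∩ s, w₃ v = ∑ v ∈ fc K x ∩ s, w v :=
        Finset.sum_congr rfl fun v hv => if_pos hv
      rw [e1, e2, hw1]
    · exact wt_combo K x
    · have e1 : ∑ v ∈ fc K x, w₃ v • v = ∑ v ∈ fc K x ∩ s, w₃ v • v :=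
        (Finset.sum_subset Finset.inter_subset_left fun v hv hv' => by
          rw [hw₃zero v hv', zero_smul]).symm
      have e2 : ∑ v ∈ fc K x ∩ s, w₃ v • v = ∑ v ∈ fc K x ∩ s, w v • v :=
        Finset.sum_congr rfl fun v hv => by rw [show w₃ v = w v from if_pos hv]
      rw [e1, e2, hwx]
  intro v hv
  rw [hkey]
  exact hw₃zero v fun hv' => hv (Finset.mem_of_mem_inter_right hv')

theorem wt_sum_over {s : Finset E} (hs : s ∈ K.faces) {x : K.space}
    (hx : (x : E) ∈ convexHull ℝ (s : Set E)) : ∑ v ∈ s, wt K x v = 1 := by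
  rw [sum_ext (w := wt K x) (wt_support_subset K hs hx) (wt_zero K x) (fun _ r => r)
    (fun _ => rfl)]
  exact wt_sum K x

theorem wt_combo_over {s : Finset E} (hs : s ∈ K.faces) {x : K.space}
    (hx : (x : E) ∈ convexHull ℝ (s : Set E)) : ∑ v ∈ s, wt K x v • v = (x : E) := by
  rw [sum_ext (w := wt K x) (wt_support_subset K hs hx) (wt_zero K x) (fun v r => r • v)
    (fun _ => zero_smul _ _)]
  exact wt_combo K x

/-- The weight functions are continuous on each closed simplex. -/
theorem continuousOn_wt {s : Finset E} (hs : s ∈ K.faces) (v : E) :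
    ContinuousOn (fun x : K.space => wt K x v)
      {x : K.space | (x : E) ∈ convexHull ℝ (s : Set E)} := by
  classical
  by_cases hv : v ∈ s
  · -- build an affine basis of the affine span of `s`
    have hsne : (s : Set E).Nonempty := by
      rw [Finset.coe_nonempty, Finset.nonempty_iff_ne_empty]
      rintro rfl
      exact K.empty_notMem hs
    haveI : Nonempty ↥(affineSpan ℝ (s : Set E)) :=
      ((affineSpan_nonempty ℝ).2 hsne).to_subtype
    set P := affineSpan ℝ (s : Set E) with hP
    set b : s → P := fun i => ⟨(i : E), subset_affineSpan ℝ _ i.2⟩ with hb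
    have hbind : AffineIndependent ℝ b := by
      apply AffineIndependent.of_comp P.subtype
      exact K.indep hs
    have htot : affineSpan ℝ (Set.range b) = ⊤ := by
      have hr : Set.range b = ((↑) : P → E) ⁻¹' (s : Set E) := by
        ext p
        simp only [Set.mem_range, Set.mem_preimage, hb]
        constructor
        · rintro ⟨i, rfl⟩
          exact i.2
        · intro hp
          exact ⟨⟨(p : E), hp⟩, Subtype.ext rfl⟩
      rw [hr]
      haveI : Nonempty ((s : Set E)) := hsne.to_subtype
      exact affineSpan_coe_preimage_eq_top _
    set B : AffineBasis s ℝ P := ⟨b, hbind, htot⟩ with hB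
    have hcoord : Continuous (B.coord ⟨v, hv⟩) := AffineMap.continuous_of_finiteDimensional _
    rw [continuousOn_iff_continuous_restrict]
    have hrestr : Set.restrict {x : K.space | (x : E) ∈ convexHull ℝ (s : Set E)}
        (fun x : K.space => wt K x v)
        = fun z : {x : K.space | (x : E) ∈ convexHull ℝ (s : Set E)} =>
          B.coord ⟨v, hv⟩ ⟨((z : K.space) : E), convexHull_subset_affineSpan _ z.2⟩ := by
      funext z
      obtain ⟨x, hx⟩ := z
      have hsum : (∑ i : s, wt K x ↑i) = 1 := by
        rw [Finset.sum_coe_sort s (wt K x)]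
        exact wt_sum_over K hs hx
      have h1 : (⟨(x : E), convexHull_subset_affineSpan _ hx⟩ : P)
          = Finset.univ.affineCombination ℝ B (fun i : s => wt K x ↑i) := by
        apply Subtype.coe_injective
        show (x : E)
            = ((Finset.univ.affineCombination ℝ (⇑B) fun i : s => wt K x ↑i : P) : E)
        have hmap : ((Finset.univ.affineCombination ℝ (⇑B) fun i : s => wt K x ↑i : P) : E)
            = Finset.univ.affineCombination ℝ (fun i : s => (i : E)) fun i : s => wt K x ↑i := by
          have hm := Finset.map_affineCombination Finset.univ (⇑B)
            (fun i : s => wt K x ↑i) hsum P.subtype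
          exact hm
        rw [hmap, Finset.affineCombination_eq_linear_combination _ _ _ hsum,
          Finset.sum_coe_sort s (fun u => wt K x u • u)]
        exact (wt_combo_over K hs hx).symm
      simp only [Set.restrict_apply]
      rw [h1, AffineBasis.coord_apply_combination_of_mem _ (Finset.mem_univ _) hsum]
      rfl
    show Continuous (Set.restrict {x : K.space | (x : E) ∈ convexHull ℝ (s : Set E)}
      (fun x : K.space => wt K x v))
    rw [hrestr]
    exact hcoord.comp ((continuous_subtype_val.comp continuous_subtype_val).subtype_mk _)
  · exact continuousOn_const.congr fun x hx => wt_support_subset K hs hx v hv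

variable (hlf : ∀ x : K.space, ∃ N : Set K.space, N ∈ nhds x ∧
      {s ∈ K.faces | ∃ y : K.space, y ∈ N ∧ (y : E) ∈ convexHull ℝ (s : Set E)}.Finite)

include hlf

/-- By local finiteness, the weight functions are globally continuous. -/
theorem continuous_wt (v : E) : Continuous (fun x : K.space => wt K x v) := by
  classical
  rw [continuous_iff_continuousAt]
  intro x₀
  obtain ⟨N, hN, hF⟩ := hlf x₀
  set C : Finset E → Set K.space := fun s => {x : K.space | (x : E) ∈ convexHull ℝ (s : Set E)}
    with hC
  have hclosed : ∀ s : Finset E, IsClosed (C s) := fun s =>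
    ((s.finite_toSet.isCompact_convexHull ℝ).isClosed).preimage continuous_subtype_val
  have hcover : N ⊆ ⋃ s ∈ hF.toFinset, C s := by
    intro x hx
    have hfcF : fc K x ∈ hF.toFinset :=
      (Set.Finite.mem_toFinset hF).2 ⟨fc_mem K x, x, hx, mem_hull_fc K x⟩
    exact Set.mem_biUnion hfcF (mem_hull_fc K x)
  have hcwa : ∀ F : Finset (Finset E), (∀ s ∈ F, s ∈ K.faces) →
      ContinuousWithinAt (fun x : K.space => wt K x v) (⋃ s ∈ F, C s) x₀ := by
    intro F
    induction F using Finset.induction_on with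
    | empty =>
      intro _
      simp only [Finset.notMem_empty, Set.iUnion_of_empty, Set.iUnion_empty]
      intro h
      simp [ContinuousWithinAt, nhdsWithin_empty]
    | insert s F hnot ih =>
      intro hmem
      rw [Finset.set_biUnion_insert]
      apply ContinuousWithinAt.union
      · by_cases hx₀ : x₀ ∈ C s
        · exact (continuousOn_wt K (hmem s (Finset.mem_insert_self s F)) v) x₀ hx₀
        · exact continuousWithinAt_of_notMem_closure (by
            rwa [(hclosed s).closure_eq])
      · exact ih fun t ht => hmem t (Finset.mem_insert_of_mem ht)
  have hmemN : (⋃ s ∈ hF.toFinset, C s) ∈ nhds x₀ := Filter.mem_of_superset hN hcover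
  exact ContinuousWithinAt.continuousAt
    (hcwa hF.toFinset fun s hsF => ((Set.Finite.mem_toFinset hF).1 hsF).1) hmemN

/-- Local-finiteness based continuity of sums over the carrier face. -/
theorem continuous_locSum {M : Type} [AddCommMonoid M] [TopologicalSpace M] [ContinuousAdd M]
    (G : E → ℝ → ℝ → M)
    (hG0 : ∀ v b, 0 ≤ b → G v 0 b = 0)
    (hGc : ∀ v, Continuous fun ab : ℝ × ℝ => G v ab.1 ab.2) :
    Continuous fun p : K.space × K.space => ∑ v ∈ fc K p.1, G v (wt K p.1 v) (wt K p.2 v) := by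
  classical
  rw [continuous_iff_continuousAt]
  intro p₀
  obtain ⟨N, hN, hF⟩ := hlf p₀.1
  set V : Finset E := hF.toFinset.biUnion id with hV
  have hfc : ∀ x : K.space, x ∈ N → fc K x ⊆ V := by
    intro x hx
    intro v hv
    refine Finset.mem_biUnion.2 ⟨fc K x, ?_, hv⟩
    exact (Set.Finite.mem_toFinset hF).2 ⟨fc_mem K x, x, hx, mem_hull_fc K x⟩
  have heq : ∀ p : K.space × K.space, p.1 ∈ N →
      (∑ v ∈ fc K p.1, G v (wt K p.1 v) (wt K p.2 v))
        = ∑ v ∈ V, G v (wt K p.1 v) (wt K p.2 v) := by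
    intro p hp
    refine Finset.sum_subset (hfc p.1 hp) fun v _ hv => ?_
    rw [wt_zero K _ v hv, hG0 _ _ (wt_nonneg K _ v)]
  have hVcont : Continuous fun p : K.space × K.space =>
      ∑ v ∈ V, G v (wt K p.1 v) (wt K p.2 v) := by
    apply continuous_finset_sum
    intro v _
    exact (hGc v).comp (((continuous_wt K hlf v).comp continuous_fst).prodMk
      ((continuous_wt K hlf v).comp continuous_snd))
  have hmemnhds : {p : K.space × K.space | p.1 ∈ N} ∈ nhds p₀ :=
    continuous_fst.continuousAt.preimage_mem_nhds hN
  exact hVcont.continuousAt.congr_of_eventuallyEq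
    (Filter.eventuallyEq_of_mem hmemnhds fun p hp => heq p hp)

omit hlf

/-- Overlap function. -/
noncomputable def sfn (p : K.space × K.space) : ℝ :=
  ∑ v ∈ fc K p.1, min (wt K p.1 v) (wt K p.2 v)

/-- Unnormalized midpoint. -/
noncomputable def cfn (p : K.space × K.space) : E :=
  ∑ v ∈ fc K p.1, min (wt K p.1 v) (wt K p.2 v) • v

include hlf

theorem continuous_sfn : Continuous (sfn K) := by
  apply continuous_locSum K hlf (fun v a b => min a b)
  · intro v b hb
    exact min_eq_left hb
  · intro v
    exact continuous_fst.min continuous_snd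

theorem continuous_cfn : Continuous (cfn K) := by
  apply continuous_locSum K hlf (fun v a b => min a b • v)
  · intro v b hb
    rw [min_eq_left hb, zero_smul]
  · intro v
    exact (continuous_fst.min continuous_snd).smul continuous_const

omit hlf

theorem sfn_nonneg (p : K.space × K.space) : 0 ≤ sfn K p :=
  Finset.sum_nonneg fun v _ => le_min (wt_nonneg K _ v) (wt_nonneg K _ v)

theorem sfn_le_one (p : K.space × K.space) : sfn K p ≤ 1 := by
  rw [← wt_sum K p.1]
  exact Finset.sum_le_sum fun v _ => min_le_left _ _

theorem sfn_self (x : K.space) : sfn K (x, x) = 1 := by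
  rw [← wt_sum K x]
  exact Finset.sum_congr rfl fun v _ => min_self _

theorem cfn_self (x : K.space) : cfn K (x, x) = (x : E) := by
  rw [← wt_combo K x]
  exact Finset.sum_congr rfl fun v _ => by rw [min_self]

theorem eq_of_sfn_eq_one {x y : K.space} (h : sfn K (x, y) = 1) : x = y := by
  classical
  set A := fc K x with hA
  set Bf := fc K y with hBf
  set a := wt K x with ha
  set b := wt K y with hb
  have hb0 : ∀ v ∉ Bf, b v = 0 := wt_zero K y
  have ha0 : ∀ v ∉ A, a v = 0 := wt_zero K x
  have step0 : ∑ v ∈ A, b v = ∑ v ∈ A ∩ Bf, b v := by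
    refine (Finset.sum_subset Finset.inter_subset_left fun v hv hv' => ?_).symm
    exact hb0 v fun hvB => hv' (Finset.mem_inter.2 ⟨hv, hvB⟩)
  have step1 : sfn K (x, y) ≤ ∑ v ∈ A, b v :=
    Finset.sum_le_sum fun v _ => min_le_right _ _
  have step2 : ∑ v ∈ A ∩ Bf, b v ≤ ∑ v ∈ Bf, b v :=
    Finset.sum_le_sum_of_subset_of_nonneg Finset.inter_subset_right
      fun v _ _ => wt_nonneg K y v
  have hsumb : ∑ v ∈ Bf, b v = 1 := wt_sum K y
  -- all inequalities are equalities
  have hAb : ∑ v ∈ A, b v = 1 := le_antisymm (by rw [step0]; exact step2.trans hsumb.le)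
    (h ▸ step1)
  have hinterb : ∑ v ∈ A ∩ Bf, b v = 1 := by rw [← step0]; exact hAb
  -- b vanishes on Bf \ A
  have hdiff : ∀ v ∈ Bf, v ∉ A → b v = 0 := by
    have hsplit : ∑ v ∈ A ∩ Bf, b v + ∑ v ∈ Bf \ A, b v = ∑ v ∈ Bf, b v := by
      rw [Finset.inter_comm]
      exact Finset.sum_inter_add_sum_sdiff Bf A b
    have hzero : ∑ v ∈ Bf \ A, b v = 0 := by
      have := hsplit
      rw [hinterb, hsumb] at this
      linarith
    intro v hv hv'
    have := (Finset.sum_eq_zero_iff_of_nonneg fun u _ => wt_nonneg K y u).1 hzero v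
      (Finset.mem_sdiff.2 ⟨hv, hv'⟩)
    exact this
  -- on A : min a b = b, so b ≤ a
  have hminb : ∀ v ∈ A, min (a v) (b v) = b v := by
    have hle : ∀ v ∈ A, min (a v) (b v) ≤ b v := fun v _ => min_le_right _ _
    have hsums : ∑ v ∈ A, min (a v) (b v) = ∑ v ∈ A, b v := by
      rw [hAb]
      exact h
    exact (Finset.sum_eq_sum_iff_of_le hle).1 hsums
  have hba : ∀ v ∈ A, b v ≤ a v := fun v hv => min_eq_right_iff.1 (hminb v hv)
  -- sums of a and b over A agree, so a = b on A
  have hsuma : ∑ v ∈ A, a v = 1 := wt_sum K x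
  have haeqb : ∀ v ∈ A, b v = a v := by
    apply (Finset.sum_eq_sum_iff_of_le hba).1
    rw [hAb, hsuma]
  -- a = b everywhere
  have hfun : a = b := by
    funext v
    by_cases hv : v ∈ A
    · exact (haeqb v hv).symm
    · rw [ha0 v hv]
      by_cases hvB : v ∈ Bf
      · exact (hdiff v hvB hv).symm
      · exact (hb0 v hvB).symm
  -- conclude x = y
  have hx : (x : E) = ∑ v ∈ A, a v • v := (wt_combo K x).symm
  have hy : (y : E) = ∑ v ∈ Bf, b v • v := (wt_combo K y).symm
  have hbA : ∀ v ∉ A, b v = 0 := fun v hv => by rw [← hfun]; exact ha0 v hv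
  have : (x : E) = (y : E) := by
    rw [hx, hy]
    calc ∑ v ∈ A, a v • v = ∑ v ∈ A, b v • v := by rw [hfun]
      _ = ∑ v ∈ Bf, b v • v :=
        sum_ext hbA hb0 (fun v r => r • v) fun v => zero_smul ℝ v
  exact Subtype.ext this

/-- The normalized midpoint lies in the hull of both carrier faces. -/
theorem c_mem_hulls {x y : K.space} (h : 0 < sfn K (x, y)) :
    (sfn K (x, y))⁻¹ • cfn K (x, y) ∈ convexHull ℝ ((fc K x : Set E)) ∧
    (sfn K (x, y))⁻¹ • cfn K (x, y) ∈ convexHull ℝ ((fc K y : Set E)) := by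
  classical
  set m : E → ℝ := fun v => min (wt K x v) (wt K y v) with hm
  have hm0 : ∀ v, 0 ≤ m v := fun v => le_min (wt_nonneg K x v) (wt_nonneg K y v)
  have hCM : (sfn K (x, y))⁻¹ • cfn K (x, y) = (fc K x).centerMass m id := by
    rw [Finset.centerMass]
    rfl
  constructor
  · rw [hCM]
    exact Finset.centerMass_mem_convexHull _ (fun v _ => hm0 v) h fun v hv =>
      Finset.mem_coe.2 hv
  · -- restrict the sums to the intersection
    have hmz : ∀ v ∈ fc K x, v ∉ fc K x ∩ fc K y → m v = 0 := by
      intro v hv hv'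
      have hvy : v ∉ fc K y := fun hy => hv' (Finset.mem_inter.2 ⟨hv, hy⟩)
      rw [hm]
      simp only
      rw [wt_zero K y v hvy]
      exact min_eq_right (wt_nonneg K x v)
    have hs' : sfn K (x, y) = ∑ v ∈ fc K x ∩ fc K y, m v :=
      (Finset.sum_subset Finset.inter_subset_left hmz).symm
    have hc' : cfn K (x, y) = ∑ v ∈ fc K x ∩ fc K y, m v • v :=
      (Finset.sum_subset Finset.inter_subset_left fun v hv hv' => by
        show m v • v = 0
        rw [hmz v hv hv', zero_smul]).symm
    have hCM' : (sfn K (x, y))⁻¹ • cfn K (x, y) = (fc K x ∩ fc K y).centerMass m id := by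
      rw [Finset.centerMass]
      simp only [id_eq]
      rw [← hs', ← hc']
    rw [hCM']
    refine Finset.centerMass_mem_convexHull _ (fun v _ => hm0 v) ?_ fun v hv =>
      Finset.mem_coe.2 (Finset.mem_of_mem_inter_right hv)
    rw [← hs']
    exact h

end MilnorDiagAux

open MilnorDiagAux

set_option maxHeartbeats 2000000 in
/-- Milnor's lemma: for a locally finite simplicial complex `K` with underlying space
`B = K.space` (subspace topology), the pair `(B × B, Δ(B))` admits a fibrewise Strøm
structure `(u, h)` over `B` (second-factor projection, diagonal section):
`u⁻¹(0) = Δ(B)`, `h` starts at the identity, is stationary on the diagonal, preserves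
the second coordinate, and compresses `{u < 1}` into the diagonal at time `1`. In
particular `(B × B, Δ(B))` is an NDR pair and `d(B)` is fibrewise well-pointed. -/
theorem diagonal_ndr_of_locally_finite_simplicial_complex
    (E : Type) [NormedAddCommGroup E] [NormedSpace ℝ E] [FiniteDimensional ℝ E]
    (K : Geometry.SimplicialComplex ℝ E)
    (hlf : ∀ x : K.space, ∃ N : Set K.space, N ∈ nhds x ∧
      {s ∈ K.faces | ∃ y : K.space, y ∈ N ∧ (y : E) ∈ convexHull ℝ (s : Set E)}.Finite) :
    ∃ (u : C(K.space × K.space, I)) (h : C((K.space × K.space) × I, K.space × K.space)),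
      (∀ x y : K.space, u (x, y) = 0 ↔ x = y) ∧
      (∀ x y : K.space, h ((x, y), 0) = (x, y)) ∧
      (∀ (x : K.space) (t : I), h ((x, x), t) = (x, x)) ∧
      (∀ (x y : K.space) (t : I), (h ((x, y), t)).2 = y) ∧
      (∀ x y : K.space, u (x, y) < 1 → (h ((x, y), 1)).1 = (h ((x, y), 1)).2) := by
  classical
  set B := K.space
  set S : B × B → ℝ := sfn K with hS
  have hScont : Continuous S := continuous_sfn K hlf
  have hCcont : Continuous (cfn K) := continuous_cfn K hlf
  -- the (safely normalized) midpoint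
  set c : B × B → E := fun p => (max (S p) 4⁻¹)⁻¹ • cfn K p with hc
  have hmaxpos : ∀ p, (0 : ℝ) < max (S p) 4⁻¹ := fun p =>
    lt_of_lt_of_le (by norm_num) (le_max_right _ _)
  have hccont : Continuous c :=
    ((hScont.max continuous_const).inv₀ fun p => (hmaxpos p).ne').smul hCcont
  -- the time reparametrization
  set ρ : B × B → ℝ := fun p => max 0 (min 1 (4 * S p - 1)) with hρ
  have hρcont : Continuous ρ :=
    continuous_const.max (continuous_const.min (((continuous_const.mul hScont).sub
      continuous_const)))
  have hρ0 : ∀ p, 0 ≤ ρ p := fun p => le_max_left _ _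
  have hρ1 : ∀ p, ρ p ≤ 1 := fun p => max_le zero_le_one (min_le_left _ _)
  set τ : (B × B) × I → ℝ := fun q => ρ q.1 * (q.2 : ℝ) with hτ
  have hτcont : Continuous τ :=
    (hρcont.comp continuous_fst).mul (continuous_subtype_val.comp continuous_snd)
  have hτ0 : ∀ q, 0 ≤ τ q := fun q => mul_nonneg (hρ0 q.1) q.2.2.1
  have hτ1 : ∀ q, τ q ≤ 1 := fun q => mul_le_one₀ (hρ1 q.1) q.2.2.1 q.2.2.2
  -- the moving point
  set γ : (B × B) × I → E := fun q =>
    if τ q ≤ 2⁻¹ then ((q.1.1 : E)) + (2 * τ q) • (c q.1 - (q.1.1 : E))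
    else c q.1 + (2 * τ q - 1) • (((q.1.2 : E)) - c q.1) with hγ
  have hγcont : Continuous γ := by
    apply Continuous.if_le
    · exact ((continuous_subtype_val.comp (continuous_fst.comp continuous_fst))).add
        ((continuous_const.mul hτcont).smul ((hccont.comp continuous_fst).sub
          (continuous_subtype_val.comp (continuous_fst.comp continuous_fst))))
    · exact (hccont.comp continuous_fst).add
        (((continuous_const.mul hτcont).sub continuous_const).smul
          ((continuous_subtype_val.comp (continuous_snd.comp continuous_fst)).sub
            (hccont.comp continuous_fst)))
    · exact hτcont
    · exact continuous_const
    · intro q hq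
      rw [hq]
      have h2 : (2 : ℝ) * 2⁻¹ = 1 := by norm_num
      rw [h2, one_smul, sub_self, zero_smul, add_zero, add_sub_cancel]
  -- facts about ρ in the degenerate zone
  have hρzero : ∀ p : B × B, S p ≤ 4⁻¹ → ρ p = 0 := by
    intro p hp
    rw [hρ]
    simp only
    apply max_eq_left
    have : 4 * S p - 1 ≤ 0 := by linarith
    exact le_trans (min_le_right _ _) this
  -- membership of the moving point in the space
  have hmem : ∀ q, γ q ∈ K.space := by
    rintro ⟨⟨x, y⟩, t⟩
    by_cases hs : S (x, y) ≤ 4⁻¹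
    · have hτz : τ ((x, y), t) = 0 := by
        rw [hτ]
        simp only
        rw [hρzero (x, y) hs, zero_mul]
      rw [hγ]
      simp only [hτz]
      rw [if_pos (by norm_num)]
      rw [mul_zero, zero_smul, add_zero]
      exact x.2
    · push_neg at hs
      have hSpos : 0 < S (x, y) := lt_trans (by norm_num) hs
      have hmax : max (S (x, y)) 4⁻¹ = S (x, y) := max_eq_left hs.le
      have hcval : c (x, y) = (S (x, y))⁻¹ • cfn K (x, y) := by rw [hc]; simp only [hmax]
      obtain ⟨hcx, hcy⟩ := c_mem_hulls K hSpos
      rw [← hcval] at hcx hcy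
      set τ₀ := τ ((x, y), t) with hτ₀
      have hτ₀0 : 0 ≤ τ₀ := hτ0 _
      have hτ₀1 : τ₀ ≤ 1 := hτ1 _
      rw [hγ]
      simp only [← hτ₀]
      split_ifs with hbr
      · -- first phase: segment from x to c inside hull (fc x)
        have hx : (x : E) ∈ convexHull ℝ ((fc K x : Set E)) := mem_hull_fc K x
        have key : (x : E) + (2 * τ₀) • (c (x, y) - (x : E))
            = (1 - 2 * τ₀) • (x : E) + (2 * τ₀) • c (x, y) := by
          module
        rw [key]
        refine Geometry.SimplicialComplex.convexHull_subset_space (fc_mem K x) ?_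
        exact (convex_convexHull ℝ _) hx hcx (by linarith) (by linarith) (by ring)
      · -- second phase: segment from c to y inside hull (fc y)
        push_neg at hbr
        have hy : (y : E) ∈ convexHull ℝ ((fc K y : Set E)) := mem_hull_fc K y
        have key : c (x, y) + (2 * τ₀ - 1) • ((y : E) - c (x, y))
            = (1 - (2 * τ₀ - 1)) • c (x, y) + (2 * τ₀ - 1) • (y : E) := by
          module
        rw [key]
        refine Geometry.SimplicialComplex.convexHull_subset_space (fc_mem K y) ?_
        exact (convex_convexHull ℝ _) hcy hy (by linarith) (by linarith) (by ring)
  -- assemble the maps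
  refine ⟨⟨fun p => Set.projIcc 0 1 zero_le_one (2 - 2 * S p),
      continuous_projIcc.comp (continuous_const.sub (continuous_const.mul hScont))⟩,
    ⟨fun q => (⟨γ q, hmem q⟩, q.1.2),
      (hγcont.subtype_mk _).prodMk (continuous_snd.comp continuous_fst)⟩,
    ?_, ?_, ?_, ?_, ?_⟩
  · -- u = 0 ↔ x = y
    intro x y
    simp only [ContinuousMap.coe_mk]
    have h0 : (0 : I) = ⟨0, by constructor <;> norm_num⟩ := rfl
    rw [h0, Set.projIcc_eq_left zero_lt_one]
    constructor
    · intro hle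
      have hS1 : S (x, y) = 1 := le_antisymm (sfn_le_one K _) (by linarith)
      exact eq_of_sfn_eq_one K hS1
    · rintro rfl
      have : S (x, x) = 1 := sfn_self K x
      rw [this]
      norm_num
  · -- h starts at the identity
    intro x y
    have hτz : τ ((x, y), 0) = 0 := by
      rw [hτ]
      simp
    refine Prod.ext (Subtype.ext ?_) rfl
    show γ ((x, y), 0) = (x : E)
    simp only [hγ, hτz]
    rw [if_pos (by norm_num : (0:ℝ) ≤ 2⁻¹), mul_zero, zero_smul, add_zero]
  · -- stationary on the diagonal
    intro x t
    have hS1 : S (x, x) = 1 := sfn_self K x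
    have hcval : c (x, x) = (x : E) := by
      rw [hc]
      simp only [hS1, cfn_self K x]
      norm_num
    refine Prod.ext (Subtype.ext ?_) rfl
    show γ ((x, x), t) = (x : E)
    simp only [hγ, hcval]
    split_ifs with hbr
    · rw [sub_self, smul_zero, add_zero]
    · rw [sub_self, smul_zero, add_zero]
  · -- second coordinate preserved
    intro x y t
    rfl
  · -- compression into the diagonal
    intro x y hu
    simp only [ContinuousMap.coe_mk] at hu ⊢
    have hcoe : ((Set.projIcc (0:ℝ) 1 zero_le_one (2 - 2 * S (x, y)) : I) : ℝ)
        = max 0 (min 1 (2 - 2 * S (x, y))) := Set.coe_projIcc _ _ _ _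
    have hlt : ((Set.projIcc (0:ℝ) 1 zero_le_one (2 - 2 * S (x, y)) : I) : ℝ) < 1 :=
      Subtype.coe_lt_coe.2 hu
    rw [hcoe] at hlt
    have hmin : min 1 (2 - 2 * S (x, y)) < 1 := lt_of_le_of_lt (le_max_right _ _) hlt
    have hSgt : 1 / 2 < S (x, y) := by
      by_contra hcon
      push_neg at hcon
      have : (1 : ℝ) ≤ 2 - 2 * S (x, y) := by linarith
      rw [min_eq_left this] at hmin
      exact lt_irrefl _ hmin
    have hρ1' : ρ (x, y) = 1 := by
      rw [hρ]
      simp only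
      rw [min_eq_left (by linarith : (1:ℝ) ≤ 4 * S (x, y) - 1)]
      exact max_eq_right zero_le_one
    have hτ1' : τ ((x, y), 1) = 1 := by
      rw [hτ]
      simp only [hρ1']
      norm_num
    apply Subtype.ext
    show γ ((x, y), 1) = (y : E)
    simp only [hγ, hτ1']
    rw [if_neg (by norm_num), show (2:ℝ) * 1 - 1 = 1 by norm_num, one_smul]
    simp
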